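/- Let x, y, s, t be integers such that x^2 - 1 - s^2 - s^4 = -t^2 - 1 and y^2 - 1 - t^2 - t^4 = -(s^2 + 1). Then (x,y,s,t) = (±u^2, ±u^2, ±u, ±u) for some integer u. -/
import Mathlib

lemma aux17 (a x : ℤ) (ha : 0 ≤ a) (h : a^2 < x^2) : (a+1)^2 ≤ x^2 := by
  have h1 : a < |x| := by nlinarith [sq_abs x, abs_nonneg x]
  have h2 : a + 1 ≤ |x| := h1
  nlinarith [sq_abs x, abs_nonneg x]

theorem stmt_17 (x y s t : ℤ)
    (h1 : x^2 - 1 - s^2 - s^4 = -t^2 - 1) (h2 : y^2 - 1 - t^2 - t^4 = -(s^2 + 1)) :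
    ∃ u : ℤ, (x = u^2 ∨ x = -u^2) ∧ (y = u^2 ∨ y = -u^2) ∧
      (s = u ∨ s = -u) ∧ (t = u ∨ t = -u) := by
  have hst : s^2 = t^2 := by
    by_contra h
    rcases lt_or_gt_of_ne h with hlt | hgt
    · have := aux17 (t^2) y (sq_nonneg t) (by nlinarith)
      nlinarith [sq_nonneg s, sq_nonneg t]
    · have := aux17 (s^2) x (sq_nonneg s) (by nlinarith)
      nlinarith [sq_nonneg s, sq_nonneg t]
  refine ⟨s, ?_, ?_, Or.inl rfl, ?_⟩
  · have : x * x = s^2 * s^2 := by nlinarith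
    rcases mul_self_eq_mul_self_iff.mp this with h | h <;> simp [h]
  · have : y * y = s^2 * s^2 := by nlinarith
    rcases mul_self_eq_mul_self_iff.mp this with h | h <;> simp [h]
  · have : t * t = s * s := by nlinarith
    rcases mul_self_eq_mul_self_iff.mp this with h | h <;> simp [h]
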